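/- There is no decomposition of K_16 into edge-disjoint copies of a graph G with degree sequence (4,4,3,3,3,3) in which exactly two pairs of degree-3 vertices of G are adjacent: any vertex of K_16 is covered with degrees summing to 15 from {3,4}, forcing 8 vertices to receive degrees {3,3,3,3,3}; these 8 vertices contribute C(8,2)=28 pairs each of which must be adjacent within some copy as a pair of degree-3 vertices, but the 12 copies provide only 12·2 = 24 such adjacent pairs, a contradiction. -/

import Mathlib

open SimpleGraph

/-- `H` decomposes into edge-disjoint copies of `G`. -/
def HasDecomp {V W : Type*} (H : SimpleGraph V) (G : SimpleGraph W) : Prop :=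
  ∃ parts : Set H.Subgraph,
    (∀ p ∈ parts, Nonempty (p.coe ≃g G)) ∧
    ∀ e ∈ H.edgeSet, ∃! p, p ∈ parts ∧ e ∈ SimpleGraph.Subgraph.edgeSet p

open Finset in
lemma card_filter_prod' {α β : Type*} [Fintype α] [Fintype β] (r : α → β → Prop)
    [∀ a b, Decidable (r a b)] :
    #(univ.filter fun q : α × β => r q.1 q.2) = ∑ a, #(univ.filter fun b => r a b) := by
  simp_rw [Finset.card_filter]
  rw [Fintype.sum_prod_type]

open Finset in
lemma swap_count' {α β : Type*} [Fintype β] (s : Finset α) (r : α → β → Prop)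
    [∀ a b, Decidable (r a b)] :
    ∑ a ∈ s, #(univ.filter fun b => r a b) = ∑ b, #(s.filter fun a => r a b) := by
  simp_rw [Finset.card_filter]
  exact Finset.sum_comm

section isoAux
open Finset
variable {α β : Type*} [Fintype α] [Fintype β] {A : SimpleGraph α} (p : A.Subgraph)
  {H : SimpleGraph β} (φ : p.coe ≃g H)

lemma deg_iso' (v : α) (hv : v ∈ p.verts) [∀ u w, Decidable (p.Adj u w)]
    [DecidableRel H.Adj] :
    #(univ.filter fun u => p.Adj v u) = #(univ.filter fun w => H.Adj (φ ⟨v, hv⟩) w) := by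
  refine Finset.card_bij'
    (fun u hu => φ ⟨u, p.edge_vert ((mem_filter.mp hu).2).symm⟩)
    (fun w _ => ((φ.symm w : p.verts) : α)) ?_ ?_ ?_ ?_
  · intro u hu
    simp only [mem_filter, mem_univ, true_and]
    exact φ.map_adj_iff.mpr ((mem_filter.mp hu).2)
  · intro w hw
    simp only [mem_filter, mem_univ, true_and] at hw ⊢
    have : p.coe.Adj ⟨v, hv⟩ (φ.symm w) := by
      rw [← φ.map_adj_iff]
      simpa using hw
    exact this
  · intro u hu; simp
  · intro w hw; simp

lemma vert_iso' (P : α → Prop) (Q : β → Prop) [DecidablePred P] [DecidablePred Q]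
    (h1 : ∀ v, P v → v ∈ p.verts)
    (hPQ : ∀ v (h : v ∈ p.verts), (P v ↔ Q (φ ⟨v, h⟩))) :
    #(univ.filter fun v => P v) = #(univ.filter fun w => Q w) := by
  refine Finset.card_bij'
    (fun v hv => φ ⟨v, h1 v (mem_filter.mp hv).2⟩)
    (fun w _ => ((φ.symm w : p.verts) : α)) ?_ ?_ ?_ ?_
  · intro v hv
    simp only [mem_filter, mem_univ, true_and] at hv ⊢
    exact (hPQ v _).mp hv
  · intro w hw
    simp only [mem_filter, mem_univ, true_and] at hw ⊢
    rw [hPQ _ (φ.symm w).2]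
    simpa using hw
  · intro v hv; simp
  · intro w hw; simp

lemma pair_iso' (P : α → Prop) (Q : β → Prop) [DecidablePred P] [DecidablePred Q]
    [∀ u w, Decidable (p.Adj u w)] [DecidableRel H.Adj]
    (hPQ : ∀ v (h : v ∈ p.verts), (P v ↔ Q (φ ⟨v, h⟩))) :
    #(univ.filter fun q : α × α => p.Adj q.1 q.2 ∧ P q.1 ∧ P q.2)
      = #(univ.filter fun q : β × β => H.Adj q.1 q.2 ∧ Q q.1 ∧ Q q.2) := by
  refine Finset.card_bij'
    (fun q hq => (φ ⟨q.1, p.edge_vert (mem_filter.mp hq).2.1⟩,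
                  φ ⟨q.2, p.edge_vert ((mem_filter.mp hq).2.1).symm⟩))
    (fun r _ => (((φ.symm r.1 : p.verts) : α), ((φ.symm r.2 : p.verts) : α))) ?_ ?_ ?_ ?_
  · intro q hq
    obtain ⟨-, hadj, hp1, hp2⟩ := mem_filter.mp hq
    refine mem_filter.mpr ⟨mem_univ _, ?_, ?_, ?_⟩
    · exact φ.map_adj_iff.mpr hadj
    · exact (hPQ _ _).mp hp1
    · exact (hPQ _ _).mp hp2
  · intro r hr
    obtain ⟨-, hadj, hq1, hq2⟩ := mem_filter.mp hr
    refine mem_filter.mpr ⟨mem_univ _, ?_, ?_, ?_⟩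
    · have : p.coe.Adj (φ.symm r.1) (φ.symm r.2) := by
        rw [← φ.map_adj_iff]; simpa using hadj
      exact this
    · rw [hPQ _ (φ.symm r.1).2]; simpa using hq1
    · rw [hPQ _ (φ.symm r.2).2]; simpa using hq2
  · intro q hq; simp
  · intro r hr; simp
end isoAux

open Finset in
/-- There is no decomposition of `K_16` into edge-disjoint copies of a graph `G`
with degree sequence `(4,4,3,3,3,3)` in which exactly two pairs of degree-3
vertices of `G` are adjacent. -/
theorem stmt_7 (G : SimpleGraph (Fin 6)) [DecidableRel G.Adj]
    (hdeg : (Finset.univ.val.map (fun x => G.degree x) : Multiset ℕ) = {4, 4, 3, 3, 3, 3})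
    (hpairs : {e ∈ G.edgeSet | ∀ x ∈ e, G.degree x = 3}.ncard = 2) :
    ¬ HasDecomp (⊤ : SimpleGraph (Fin 16)) G := by
  classical
  rintro ⟨parts, hiso, hcov⟩
  ---- G-side facts ----
  have gdeg : ∀ w, G.degree w = #(univ.filter fun u => G.Adj w u) := by
    intro w
    rw [← card_neighborFinset_eq_degree, neighborFinset_eq_filter]
  have g34 : ∀ w, G.degree w = 3 ∨ G.degree w = 4 := by
    intro w
    have : G.degree w ∈ (Finset.univ.val.map (fun x => G.degree x) : Multiset ℕ) :=
      Multiset.mem_map_of_mem _ (mem_univ w)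
    rw [hdeg] at this
    simp at this
    omega
  have gsum : ∑ w, G.degree w = 20 := by
    have h0 : ∑ w, G.degree w = ((Finset.univ.val.map (fun x => G.degree x) : Multiset ℕ)).sum := rfl
    rw [h0, hdeg]; rfl
  have g4card : #(univ.filter fun w => G.degree w = 4) = 2 := by
    have h1 : ((Finset.univ.val.map (fun x => G.degree x) : Multiset ℕ)).count 4 = 2 := by
      rw [hdeg]; rfl
    rw [Multiset.count_map] at h1
    rw [Multiset.filter_congr (fun x _ => eq_comm)] at h1
    exact h1
  set G3 : SimpleGraph (Fin 6) :=
    { Adj := fun u v => G.Adj u v ∧ G.degree u = 3 ∧ G.degree v = 3,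
      symm := by constructor; intro u v h; exact ⟨h.1.symm, h.2.2, h.2.1⟩,
      loopless := by constructor; intro u h; exact G.loopless.irrefl u h.1 } with hG3
  have hset : {e ∈ G.edgeSet | ∀ x ∈ e, G.degree x = 3} = G3.edgeSet := by
    ext e
    induction e using Sym2.ind with
    | _ a b =>
      simp only [Set.mem_setOf_eq, mem_edgeSet, hG3, Sym2.mem_iff]
      constructor
      · rintro ⟨h1, h2⟩; exact ⟨h1, h2 a (Or.inl rfl), h2 b (Or.inr rfl)⟩
      · rintro ⟨h1, h2, h3⟩; exact ⟨h1, by rintro x (rfl | rfl) <;> assumption⟩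
  have hG3card : #G3.edgeFinset = 2 := by
    rw [hset] at hpairs
    rw [Set.ncard_eq_toFinset_card'] at hpairs
    simpa [edgeFinset] using hpairs
  have gpairs : #(univ.filter fun q : Fin 6 × Fin 6 =>
      G.Adj q.1 q.2 ∧ G.degree q.1 = 3 ∧ G.degree q.2 = 3) = 4 := by
    have h2 := G3.two_mul_card_edgeFinset
    rw [hG3card] at h2
    rw [← h2]
  ---- parts as a Finset ----
  have hfinSub : Finite (⊤ : SimpleGraph (Fin 16)).Subgraph :=
    Finite.of_injective (fun p => (p.verts, p.Adj))
      (fun p q h => SimpleGraph.Subgraph.ext (congrArg Prod.fst h) (congrArg Prod.snd h))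
  have hfin : parts.Finite := Set.toFinite parts
  set P : Finset (⊤ : SimpleGraph (Fin 16)).Subgraph := hfin.toFinset with hPdef
  have hPmem : ∀ p, p ∈ P ↔ p ∈ parts := fun p => hfin.mem_toFinset
  set d : (⊤ : SimpleGraph (Fin 16)).Subgraph → Fin 16 → ℕ :=
    fun p v => #(univ.filter fun u => p.Adj v u) with hd
  ---- per-part facts ----
  have hd0 : ∀ p v, v ∉ p.verts → d p v = 0 := by
    intro p v hv
    simp only [hd, Finset.card_eq_zero, Finset.filter_eq_empty_iff]
    intro u _ hadj
    exact hv (p.edge_vert hadj)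
  have hdval : ∀ p ∈ parts, ∀ (φ : p.coe ≃g G), ∀ v (h : v ∈ p.verts),
      d p v = G.degree (φ ⟨v, h⟩) := by
    intro p hp φ v h
    rw [hd, gdeg]
    exact deg_iso' p φ v h
  have F1 : ∀ p ∈ parts, ∀ v, d p v = 0 ∨ d p v = 3 ∨ d p v = 4 := by
    intro p hp v
    by_cases h : v ∈ p.verts
    · obtain ⟨φ⟩ := hiso p hp
      rw [hdval p hp φ v h]
      rcases g34 (φ ⟨v, h⟩) with h' | h'
      · exact Or.inr (Or.inl h')
      · exact Or.inr (Or.inr h')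
    · exact Or.inl (hd0 p v h)
  have F2 : ∀ p ∈ parts, #(univ.filter fun v => d p v = 4) = 2 := by
    intro p hp
    obtain ⟨φ⟩ := hiso p hp
    rw [← g4card]
    refine vert_iso' p φ _ _ ?_ ?_
    · intro v hv
      by_contra h
      rw [hd0 p v h] at hv
      exact absurd hv (by norm_num)
    · intro v h
      rw [hdval p hp φ v h]
  have F3 : ∀ p ∈ parts, ∑ v, d p v = 20 := by
    intro p hp
    obtain ⟨φ⟩ := hiso p hp
    have e1 : #(univ.filter fun q : Fin 16 × Fin 16 => p.Adj q.1 q.2 ∧ True ∧ True)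
        = #(univ.filter fun q : Fin 6 × Fin 6 => G.Adj q.1 q.2 ∧ True ∧ True) :=
      pair_iso' p φ (fun _ => True) (fun _ => True) (fun v h => Iff.rfl)
    simp only [and_true] at e1
    calc ∑ v, d p v = #(univ.filter fun q : Fin 16 × Fin 16 => p.Adj q.1 q.2) :=
          (card_filter_prod' _).symm
      _ = #(univ.filter fun q : Fin 6 × Fin 6 => G.Adj q.1 q.2) := e1
      _ = ∑ w, #(univ.filter fun u => G.Adj w u) := card_filter_prod' _
      _ = ∑ w, G.degree w := by simp_rw [← gdeg]
      _ = 20 := gsum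
  have F4 : ∀ p ∈ parts, #(univ.filter fun q : Fin 16 × Fin 16 =>
      p.Adj q.1 q.2 ∧ d p q.1 = 3 ∧ d p q.2 = 3) = 4 := by
    intro p hp
    obtain ⟨φ⟩ := hiso p hp
    rw [← gpairs]
    exact pair_iso' p φ (fun v => d p v = 3) (fun w => G.degree w = 3)
      (fun v h => by
        show d p v = 3 ↔ G.degree (φ ⟨v, h⟩) = 3
        rw [hdval p hp φ v h])
  ---- each vertex covered with total degree 15 ----
  have covA : ∀ v u : Fin 16, u ≠ v → #(P.filter fun p => p.Adj v u) = 1 := by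
    intro v u hne
    have he : s(v, u) ∈ (⊤ : SimpleGraph (Fin 16)).edgeSet := by
      rw [mem_edgeSet, top_adj]
      exact fun h => hne h.symm
    obtain ⟨p₀, ⟨hp₀, he₀⟩, huniq⟩ := hcov _ he
    rw [Finset.card_eq_one]
    refine ⟨p₀, ?_⟩
    ext q
    simp only [Finset.mem_filter, Finset.mem_singleton]
    constructor
    · rintro ⟨hq, hadj⟩
      exact huniq q ⟨(hPmem q).mp hq, SimpleGraph.Subgraph.mem_edgeSet.mpr hadj⟩
    · rintro rfl
      exact ⟨(hPmem _).mpr hp₀, SimpleGraph.Subgraph.mem_edgeSet.mp he₀⟩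
  have StepA : ∀ v, ∑ p ∈ P, d p v = 15 := by
    intro v
    have h1 : ∑ p ∈ P, d p v = ∑ u, #(P.filter fun p => p.Adj v u) := by
      rw [hd]
      exact swap_count' P (fun p u => p.Adj v u)
    rw [h1]
    have h2 : ∀ u : Fin 16, #(P.filter fun p => p.Adj v u) = if u = v then 0 else 1 := by
      intro u
      by_cases h : u = v
      · subst h
        rw [if_pos rfl]
        simp only [Finset.card_eq_zero, Finset.filter_eq_empty_iff]
        intro p _ hadj
        exact (p.adj_sub hadj).ne rfl
      · rw [if_neg h]
        exact covA v u h
    rw [Finset.sum_congr rfl (fun u _ => h2 u)]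
    rw [Finset.sum_ite, Finset.sum_const, Finset.sum_const]
    simp [Finset.filter_ne', Finset.card_erase_of_mem]
  ---- number of parts is 12 ----
  have hPcard : #P = 12 := by
    have t1 : ∑ p ∈ P, ∑ v, d p v = 20 * #P := by
      rw [Finset.sum_congr rfl (fun p hp => F3 p ((hPmem p).mp hp))]
      rw [Finset.sum_const, smul_eq_mul, mul_comm]
    have t2 : ∑ p ∈ P, ∑ v, d p v = 240 := by
      rw [Finset.sum_comm]
      rw [Finset.sum_congr rfl (fun v _ => StepA v)]
      simp
    omega
  ---- the count of parts giving degree 4 at a vertex ----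
  set c : Fin 16 → ℕ := fun v => #(P.filter fun p => d p v = 4) with hc
  have StepC : ∀ v, c v = 0 ∨ c v = 3 := by
    intro v
    have key : 4 * #(P.filter fun p => d p v = 4) + 3 * #(P.filter fun p => d p v = 3) = 15 := by
      have e1 : ∑ p ∈ P, d p v
          = ∑ p ∈ P, (4 * (if d p v = 4 then 1 else 0) + 3 * (if d p v = 3 then 1 else 0)) := by
        refine Finset.sum_congr rfl (fun p hp => ?_)
        rcases F1 p ((hPmem p).mp hp) v with h | h | h <;> rw [h] <;> norm_num
      rw [StepA v] at e1
      rw [Finset.sum_add_distrib, ← Finset.mul_sum, ← Finset.mul_sum,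
        ← Finset.card_filter, ← Finset.card_filter] at e1
      omega
    simp only [hc]
    omega
  have StepD : ∑ v, c v = 24 := by
    have h1 : ∑ p ∈ P, #(univ.filter fun v => d p v = 4) = ∑ v, c v :=
      swap_count' P (fun p v => d p v = 4)
    rw [← h1, Finset.sum_congr rfl (fun p hp => F2 p ((hPmem p).mp hp)),
      Finset.sum_const, hPcard]
    norm_num
  ---- the set S of vertices always covered with degree 3 ----
  set S : Finset (Fin 16) := univ.filter fun v => c v = 0 with hS
  have hScard : #S = 8 := by
    have h3 : ∑ v, c v = 3 * #(univ.filter fun v => c v = 3) := by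
      have : ∀ v : Fin 16, c v = 3 * (if c v = 3 then 1 else 0) := by
        intro v
        rcases StepC v with h | h <;> rw [h] <;> norm_num
      rw [Finset.sum_congr rfl (fun v _ => this v), ← Finset.mul_sum, ← Finset.card_filter]
    have h4 : #(univ.filter fun v => c v = 3) = 8 := by omega
    have h5 : #(univ.filter fun v => c v = 3) + #(univ.filter fun v => ¬ c v = 3) = 16 := by
      rw [Finset.card_filter_add_card_filter_not]
      simp
    have h6 : S = univ.filter fun v => ¬ c v = 3 := by
      refine Finset.filter_congr (fun v _ => ?_)
      rcases StepC v with h | h <;> simp [h]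
    rw [h6]
    omega
  ---- final double counting ----
  have hsub : S.offDiag ⊆ P.biUnion (fun p => univ.filter fun q : Fin 16 × Fin 16 =>
      p.Adj q.1 q.2 ∧ d p q.1 = 3 ∧ d p q.2 = 3) := by
    intro q hq
    obtain ⟨h1, h2, hne⟩ := Finset.mem_offDiag.mp hq
    have he : s(q.1, q.2) ∈ (⊤ : SimpleGraph (Fin 16)).edgeSet := by
      rw [mem_edgeSet, top_adj]; exact hne
    obtain ⟨p₀, ⟨hp₀, he₀⟩, -⟩ := hcov _ he
    have hadj : p₀.Adj q.1 q.2 := SimpleGraph.Subgraph.mem_edgeSet.mp he₀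
    have hdeg3 : ∀ x y : Fin 16, x ∈ S → p₀.Adj x y → d p₀ x = 3 := by
      intro x y hxS hxy
      have hx0 : c x = 0 := (Finset.mem_filter.mp hxS).2
      have hne4 : d p₀ x ≠ 4 := by
        intro h4
        have : p₀ ∈ P.filter fun p => d p x = 4 :=
          Finset.mem_filter.mpr ⟨(hPmem p₀).mpr hp₀, h4⟩
        rw [hc] at hx0
        simp only [Finset.card_eq_zero] at hx0
        rw [hx0] at this
        exact absurd this (Finset.notMem_empty _)
      have hne0 : d p₀ x ≠ 0 := by
        intro h0
        rw [hd] at h0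
        simp only [Finset.card_eq_zero, Finset.filter_eq_empty_iff] at h0
        exact h0 (Finset.mem_univ y) hxy
      rcases F1 p₀ hp₀ x with h | h | h
      · exact absurd h hne0
      · exact h
      · exact absurd h hne4
    refine Finset.mem_biUnion.mpr ⟨p₀, (hPmem p₀).mpr hp₀, ?_⟩
    refine Finset.mem_filter.mpr ⟨Finset.mem_univ _, hadj, ?_, ?_⟩
    · exact hdeg3 q.1 q.2 h1 hadj
    · exact hdeg3 q.2 q.1 h2 hadj.symm
  have hle : #S.offDiag ≤ ∑ p ∈ P, #(univ.filter fun q : Fin 16 × Fin 16 =>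
      p.Adj q.1 q.2 ∧ d p q.1 = 3 ∧ d p q.2 = 3) :=
    le_trans (Finset.card_le_card hsub) (Finset.card_biUnion_le)
  rw [Finset.sum_congr rfl (fun p hp => F4 p ((hPmem p).mp hp)),
    Finset.sum_const, hPcard] at hle
  rw [Finset.offDiag_card, hScard] at hle
  norm_num at hle
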